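/- Let θ ∈ (0, 1/4) and τ ∈ (0, 1/4). Define φ_τ(z) = (1+z)^{1/4+θ} / (1 + (τ²/4) z)^{1/2} for z in the open right half-plane (using principal branches). Then sup over z with Re z ≥ 0 of |φ_τ(z)| is bounded by C · τ^{-1/2 - 2θ} for a constant C depending only on θ (and in fact one may take C = 16^{1/8+θ/2} (255/512)^{-1/4} (1/4 - θ)^{1/8 - θ/2}, with the bound max{1, Cτ^{-1/2-2θ}}). -/

import Mathlib

open Real Complex

lemma xlogx_ge (s : ℝ) (hs0 : 0 < s) (hs : s ≤ 1/4) :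
    (1/4 : ℝ) * Real.log (1/4) ≤ s * Real.log s := by
  have hc : ContinuousOn (fun x : ℝ => x * Real.log x) (Set.Icc s (1/4)) :=
    continuousOn_id.mul (Real.continuousOn_log.mono
      (fun x hx => Set.mem_compl_singleton_iff.mpr (ne_of_gt (hs0.trans_le hx.1))))
  have hanti : AntitoneOn (fun x : ℝ => x * Real.log x) (Set.Icc s (1/4)) := by
    apply antitoneOn_of_deriv_nonpos (convex_Icc _ _) hc
    · intro x hx
      rw [interior_Icc] at hx
      exact ((Real.hasDerivAt_mul_log (ne_of_gt (hs0.trans hx.1))).differentiableAt).differentiableWithinAt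
    · intro x hx
      rw [interior_Icc] at hx
      rw [(Real.hasDerivAt_mul_log (ne_of_gt (hs0.trans hx.1))).deriv]
      have hx0 : (0:ℝ) < x := hs0.trans hx.1
      have hlog : Real.log x ≤ Real.log (1/4) := Real.log_le_log hx0 hx.2.le
      have h4 : Real.log (1/4) ≤ -1 := by
        rw [show (1/4 : ℝ) = 4⁻¹ by norm_num, Real.log_inv]
        have he : (Real.exp 1 : ℝ) ≤ 4 := by
          have := Real.exp_one_lt_d9; linarith
        have := Real.log_le_log (Real.exp_pos 1) he
        rw [Real.log_exp] at this
        linarith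
      linarith
  exact hanti ⟨le_refl s, hs⟩ ⟨hs, le_refl _⟩ hs

set_option maxHeartbeats 1000000 in
theorem stmt_2 (θ τ : ℝ) (hθ : θ ∈ Set.Ioo (0 : ℝ) (1/4)) (hτ : τ ∈ Set.Ioo (0 : ℝ) (1/4)) :
    ∀ z : ℂ, 0 ≤ z.re →
      ‖(1 + z) ^ (((1/4 + θ : ℝ)) : ℂ) /
          (1 + ((τ ^ 2 / 4 : ℝ) : ℂ) * z) ^ (((1/2 : ℝ)) : ℂ)‖
        ≤ max 1 ((16 : ℝ) ^ (1/8 + θ/2 : ℝ) * (255/512 : ℝ) ^ (-(1/4) : ℝ) *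
            (1/4 - θ) ^ (1/8 - θ/2 : ℝ) * τ ^ (-(1/2) - 2*θ : ℝ)) := by
  obtain ⟨hθ0, hθ4⟩ := hθ
  obtain ⟨hτ0, hτ4⟩ := hτ
  intro z hz
  rw [norm_div, Complex.norm_cpow_real, Complex.norm_cpow_real]
  set t : ℝ := τ ^ 2 / 4 with ht
  have ht0 : (0:ℝ) < t := by rw [ht]; positivity
  have ht1 : t ≤ 1 := by rw [ht]; nlinarith
  set p : ℝ := 1/4 + θ with hp
  have hp0 : (0:ℝ) < p := by rw [hp]; linarith
  have hp2 : p ≤ 1/2 := by rw [hp]; linarith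
  set A := ‖1 + z‖ with hA
  set B := ‖1 + (t:ℂ) * z‖ with hB
  have hA0 : 0 ≤ A := norm_nonneg _
  have hB0 : 0 ≤ B := norm_nonneg _
  have hnsA : A^2 = (1+z.re)^2 + z.im^2 := by
    rw [hA, Complex.sq_norm, Complex.normSq_apply]
    simp
    ring
  have hnsB : B^2 = (1+t*z.re)^2 + (t*z.im)^2 := by
    rw [hB, Complex.sq_norm, Complex.normSq_apply]
    simp
    ring
  clear_value A B
  have hA1 : 1 ≤ A := by nlinarith [sq_nonneg z.im, sq_nonneg z.re]
  have hB1 : 1 ≤ B := by nlinarith [sq_nonneg (t*z.im), sq_nonneg (t*z.re), mul_nonneg ht0.le hz]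
  have hAB : t * A ≤ B := by
    have hsq : (t*A)^2 ≤ B^2 := by
      rw [mul_pow, hnsA, hnsB]
      nlinarith [mul_nonneg hz (mul_nonneg ht0.le (sub_nonneg.mpr ht1)),
        mul_nonneg (sub_nonneg.mpr ht1) ht0.le, sq_nonneg (t*z.im), sq_nonneg z.im,
        mul_nonneg (mul_nonneg ht0.le ht0.le) (sq_nonneg z.im)]
    nlinarith [hB0, mul_pos ht0 (lt_of_lt_of_le one_pos hA1)]
  have hBpos : (0:ℝ) < B := lt_of_lt_of_le one_pos hB1
  have key : A ^ p / B ^ (1/2:ℝ) ≤ t ^ (-p) := by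
    have h1 : A ^ p ≤ (B / t) ^ p :=
      Real.rpow_le_rpow hA0 (by rw [le_div_iff₀ ht0]; linarith) hp0.le
    have hBp : (0:ℝ) < B ^ (1/2:ℝ) := Real.rpow_pos_of_pos hBpos _
    calc A ^ p / B ^ (1/2:ℝ) ≤ (B/t) ^ p / B ^ (1/2:ℝ) := by
          rw [div_eq_mul_inv, div_eq_mul_inv]
          exact mul_le_mul_of_nonneg_right h1 (inv_nonneg.mpr hBp.le)
      _ = B ^ (p - 1/2) * t ^ (-p) := by
          rw [Real.div_rpow hB0 ht0.le, Real.rpow_sub hBpos, Real.rpow_neg ht0.le]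
          ring
      _ ≤ 1 * t ^ (-p) := by
          apply mul_le_mul_of_nonneg_right _ (Real.rpow_nonneg ht0.le _)
          exact Real.rpow_le_one_of_one_le_of_nonpos hB1 (by linarith)
      _ = t ^ (-p) := one_mul _
  have h2cast : (2:ℝ) = ((2:ℕ):ℝ) := by norm_num
  have hteq : t ^ (-p) = (16:ℝ) ^ (1/8 + θ/2 : ℝ) * τ ^ (-(1/2) - 2*θ : ℝ) := by
    have hτ2 : (τ^2 : ℝ) = τ ^ (2:ℝ) := by rw [h2cast, Real.rpow_natCast]
    have h16 : (16:ℝ) ^ (1/8 + θ/2 : ℝ) = (4:ℝ) ^ p := by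
      have h4 : (16:ℝ) = (4:ℝ) ^ (2:ℝ) := by rw [h2cast, Real.rpow_natCast]; norm_num
      rw [h4, ← Real.rpow_mul (by norm_num : (0:ℝ) ≤ 4)]
      congr 1
      rw [hp]; ring
    rw [ht, Real.div_rpow (by positivity) (by norm_num), hτ2, ← Real.rpow_mul hτ0.le, h16,
      Real.rpow_neg (by norm_num : (0:ℝ) ≤ 4)]
    rw [show (2 * -p : ℝ) = -(1/2) - 2*θ by rw [hp]; ring]
    rw [div_eq_mul_inv, inv_inv]
    ring
  have hs0 : (0:ℝ) < 1/4 - θ := by linarith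
  have hCs : (1:ℝ) ≤ (255/512:ℝ)^(-(1/4):ℝ) * (1/4 - θ)^(1/8 - θ/2 : ℝ) := by
    have h1 : (255/512:ℝ)^((1/4):ℝ) ≤ (1/4 - θ)^(1/8 - θ/2 : ℝ) := by
      rw [Real.rpow_def_of_pos (by norm_num), Real.rpow_def_of_pos hs0]
      apply Real.exp_le_exp.mpr
      have hx := xlogx_ge (1/4 - θ) hs0 (by linarith)
      have h2 : Real.log (255/512) ≤ Real.log (1/2) :=
        Real.log_le_log (by norm_num) (by norm_num)
      have h3 : Real.log (1/4 : ℝ) = 2 * Real.log (1/2 : ℝ) := by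
        rw [show (1/4:ℝ) = (1/2)^2 by norm_num, Real.log_pow]
        push_cast; ring
      nlinarith
    calc (1:ℝ) = (255/512:ℝ)^(-(1/4):ℝ) * (255/512:ℝ)^((1/4):ℝ) := by
          rw [← Real.rpow_add (by norm_num)]; norm_num
      _ ≤ (255/512:ℝ)^(-(1/4):ℝ) * (1/4 - θ)^(1/8 - θ/2 : ℝ) :=
          mul_le_mul_of_nonneg_left h1 (Real.rpow_nonneg (by norm_num) _)
  refine le_trans (key.trans_eq hteq) (le_trans ?_ (le_max_right _ _))
  have h16p : (0:ℝ) < (16:ℝ) ^ (1/8 + θ/2 : ℝ) := Real.rpow_pos_of_pos (by norm_num) _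
  have hτp : (0:ℝ) < τ ^ (-(1/2) - 2*θ : ℝ) := Real.rpow_pos_of_pos hτ0 _
  calc (16:ℝ) ^ (1/8 + θ/2 : ℝ) * τ ^ (-(1/2) - 2*θ : ℝ)
      = ((16:ℝ) ^ (1/8 + θ/2 : ℝ) * τ ^ (-(1/2) - 2*θ : ℝ)) * 1 := (mul_one _).symm
    _ ≤ ((16:ℝ) ^ (1/8 + θ/2 : ℝ) * τ ^ (-(1/2) - 2*θ : ℝ)) *
          ((255/512:ℝ)^(-(1/4):ℝ) * (1/4 - θ)^(1/8 - θ/2 : ℝ)) :=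
        mul_le_mul_of_nonneg_left hCs (mul_pos h16p hτp).le
    _ = (16:ℝ) ^ (1/8 + θ/2 : ℝ) * (255/512:ℝ)^(-(1/4):ℝ) *
          (1/4 - θ)^(1/8 - θ/2 : ℝ) * τ ^ (-(1/2) - 2*θ : ℝ) := by ring
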